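/- If an L-M-derectangularising sequence D_1, …, D_k exists, then there is one D'_1, …, D'_k of the same length with |D'_i| ≤ 3 for every i. -/

import Mathlib

inductive Entry | zero | one | star
deriving DecidableEq

def Rectangular {α β : Type*} (R : Set (α × β)) : Prop :=
  ∀ i j i' j', (i, i') ∈ R → (i, j') ∈ R → (j, i') ∈ R → (j, j') ∈ R

def comp {α β γ : Type*} (R : Set (α × β)) (S : Set (β × γ)) : Set (α × γ) :=
  {p | ∃ b, (p.1, b) ∈ R ∧ (b, p.2) ∈ S}

def H {D : Type*} (M : D → D → Entry) (X Y : Set D) : Set (D × D) :=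
  {p | p.1 ∈ X ∧ p.2 ∈ Y ∧ M p.1 p.2 = Entry.star}

/-- `M|_{X×Y}` is pure: it has no `0` entries or no `1` entries. -/
def MatPure {D : Type*} (M : D → D → Entry) (X Y : Set D) : Prop :=
  (∀ i ∈ X, ∀ j ∈ Y, M i j ≠ Entry.zero) ∨ (∀ i ∈ X, ∀ j ∈ Y, M i j ≠ Entry.one)

/-- `hChain M D₁ D₂ [D₃,…,D_k] = H M D₁ D₂ ∘ H M D₂ D₃ ∘ ⋯ ∘ H M D_{k-1} D_k` -/
def hChain {D : Type*} (M : D → D → Entry) : Set D → Set D → List (Set D) → Set (D × D)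
  | X, Y, [] => H M X Y
  | X, Y, Z :: rest => comp (H M X Y) (hChain M Y Z rest)

/-- `Ds` is an `L`-`M`-derectangularising sequence: each member lies in `L`, the set
of members is `M`-purifying, and the composed relation is not rectangular. -/
def IsDerect {D : Type*} (M : D → D → Entry) (L : Set (Set D)) : List (Set D) → Prop
  | X :: Y :: rest =>
      (∀ Z ∈ X :: Y :: rest, Z ∈ L) ∧
      (∀ A ∈ X :: Y :: rest, ∀ B ∈ X :: Y :: rest, MatPure M A B) ∧
      ¬ Rectangular (hChain M X Y rest)
  | _ => False

lemma triple_ncard_le {D : Type*} (a b c : D) : ({a, b, c} : Set D).ncard ≤ 3 := by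
  calc ({a, b, c} : Set D).ncard ≤ ({b, c} : Set D).ncard + 1 := Set.ncard_insert_le _ _
    _ ≤ (({c} : Set D).ncard + 1) + 1 := by
        exact Nat.add_le_add_right (Set.ncard_insert_le _ _) 1
    _ ≤ 3 := by simp [Set.ncard_singleton]

lemma hChain_mono {D : Type*} (M : D → D → Entry) :
    ∀ {rest rest' : List (Set D)} {X X' Y Y' : Set D},
    X' ⊆ X → Y' ⊆ Y → List.Forall₂ (· ⊆ ·) rest' rest →
    hChain M X' Y' rest' ⊆ hChain M X Y rest := by
  intro rest
  induction rest with
  | nil =>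
    intro rest' X X' Y Y' hX hY hF
    cases hF
    intro p hp
    exact ⟨hX hp.1, hY hp.2.1, hp.2.2⟩
  | cons Z rest ih =>
    intro rest' X X' Y Y' hX hY hF
    cases hF with
    | cons hZ hF' =>
      rintro p ⟨b, hb1, hb2⟩
      exact ⟨b, ⟨hX hb1.1, hY hb1.2.1, hb1.2.2⟩, ih hY hZ hF' hb2⟩

lemma hChain_fst {D : Type*} (M : D → D → Entry) {rest : List (Set D)} {X Y : Set D}
    {p : D × D} (hp : p ∈ hChain M X Y rest) : p.1 ∈ X := by
  cases rest with
  | nil => exact hp.1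
  | cons Z r => obtain ⟨b, hb1, _⟩ := hp; exact hb1.1

lemma shrink {D : Type*} (M : D → D → Entry) :
    ∀ (rest : List (Set D)) (X Y : Set D) (p q r : D × D),
    p ∈ hChain M X Y rest → q ∈ hChain M X Y rest → r ∈ hChain M X Y rest →
    ∃ Y' rest', Y' ⊆ Y ∧ List.Forall₂ (· ⊆ ·) rest' rest ∧
      Y'.ncard ≤ 3 ∧ (∀ Z ∈ rest', Z.ncard ≤ 3) ∧
      p ∈ hChain M {p.1, q.1, r.1} Y' rest' ∧
      q ∈ hChain M {p.1, q.1, r.1} Y' rest' ∧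
      r ∈ hChain M {p.1, q.1, r.1} Y' rest' := by
  intro rest
  induction rest with
  | nil =>
    intro X Y p q r hp hq hr
    refine ⟨{p.2, q.2, r.2}, [], ?_, .nil, triple_ncard_le _ _ _, by simp, ?_, ?_, ?_⟩
    · intro x hx
      rcases hx with h | h | h <;> subst h
      exacts [hp.2.1, hq.2.1, hr.2.1]
    · exact ⟨by simp, by simp, hp.2.2⟩
    · exact ⟨by simp, by simp, hq.2.2⟩
    · exact ⟨by simp, by simp, hr.2.2⟩
  | cons Z rest ih =>
    intro X Y p q r hp hq hr
    obtain ⟨bp, hbp1, hbp2⟩ := hp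
    obtain ⟨bq, hbq1, hbq2⟩ := hq
    obtain ⟨br, hbr1, hbr2⟩ := hr
    obtain ⟨Z', rest', hZsub, hF, hZcard, hcards, hp', hq', hr'⟩ :=
      ih Y Z (bp, p.2) (bq, q.2) (br, r.2) hbp2 hbq2 hbr2
    refine ⟨{bp, bq, br}, Z' :: rest', ?_, .cons hZsub hF,
      triple_ncard_le _ _ _, ?_, ?_, ?_, ?_⟩
    · intro x hx
      rcases hx with h | h | h <;> subst h
      exacts [hbp1.2.1, hbq1.2.1, hbr1.2.1]
    · intro W hW
      rcases List.mem_cons.mp hW with h | h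
      · exact h ▸ hZcard
      · exact hcards _ h
    · exact ⟨bp, ⟨by simp, by simp, hbp1.2.2⟩, hp'⟩
    · exact ⟨bq, ⟨by simp, by simp, hbq1.2.2⟩, hq'⟩
    · exact ⟨br, ⟨by simp, by simp, hbr1.2.2⟩, hr'⟩

lemma forall₂_sub_mem {D : Type*} :
    ∀ {rest' rest : List (Set D)}, List.Forall₂ (· ⊆ ·) rest' rest →
    ∀ Z' ∈ rest', ∃ Z ∈ rest, Z' ⊆ Z := by
  intro rest' rest hF
  induction hF with
  | nil => intro Z' h; exact absurd h (by simp)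
  | cons hZ _ ih =>
    intro Z' hZ'
    rcases List.mem_cons.mp hZ' with h | h
    · exact ⟨_, List.mem_cons_self, h ▸ hZ⟩
    · obtain ⟨W, hW, hsub⟩ := ih _ h
      exact ⟨W, List.mem_cons_of_mem _ hW, hsub⟩

lemma matPure_mono {D : Type*} {M : D → D → Entry} {A B A' B' : Set D}
    (hA : A' ⊆ A) (hB : B' ⊆ B) (h : MatPure M A B) : MatPure M A' B' := by
  rcases h with h | h
  · exact Or.inl fun i hi j hj => h i (hA hi) j (hB hj)
  · exact Or.inr fun i hi j hj => h i (hA hi) j (hB hj)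

theorem derect_small_sets {D : Type} [Fintype D] (M : D → D → Entry)
    (hsym : ∀ i j, M i j = M j i)
    (L : Set (Set D)) (hL : ∀ A ∈ L, ∀ B ⊆ A, B ∈ L)
    (Ds : List (Set D)) (h : IsDerect M L Ds) :
    ∃ Ds' : List (Set D), IsDerect M L Ds' ∧
      Ds'.length = Ds.length ∧ ∀ X ∈ Ds', X.ncard ≤ 3 := by
  match Ds, h with
  | X :: Y :: rest, ⟨hmem, hpure, hnrect⟩ =>
    rw [Rectangular] at hnrect
    push_neg at hnrect
    obtain ⟨i, j, i', j', h1, h2, h3, h4⟩ := hnrect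
    obtain ⟨Y', rest', hYsub, hF, hYcard, hcards, hp', hq', hr'⟩ :=
      shrink M rest X Y (i, i') (i, j') (j, i') h1 h2 h3
    have hX'sub : ({i, i, j} : Set D) ⊆ X := by
      intro x hx
      rcases hx with hx | hx | hx <;> subst hx
      exacts [hChain_fst M h1, hChain_fst M h1, hChain_fst M h3]
    -- subset correspondence
    have hsubcorr : ∀ W ∈ ({i, i, j} : Set D) :: Y' :: rest', ∃ Z ∈ X :: Y :: rest, W ⊆ Z := by
      intro W hW
      rcases List.mem_cons.mp hW with hW | hW
      · exact ⟨X, by simp, hW ▸ hX'sub⟩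
      rcases List.mem_cons.mp hW with hW | hW
      · exact ⟨Y, by simp, hW ▸ hYsub⟩
      · obtain ⟨Z, hZ, hsub⟩ := forall₂_sub_mem hF W hW
        exact ⟨Z, by simp [hZ], hsub⟩
    refine ⟨({i, i, j} : Set D) :: Y' :: rest', ⟨?_, ?_, ?_⟩, ?_, ?_⟩
    · intro W hW
      obtain ⟨Z, hZ, hsub⟩ := hsubcorr W hW
      exact hL Z (hmem Z hZ) W hsub
    · intro A hA B hB
      obtain ⟨ZA, hZA, hsubA⟩ := hsubcorr A hA
      obtain ⟨ZB, hZB, hsubB⟩ := hsubcorr B hB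
      exact matPure_mono hsubA hsubB (hpure ZA hZA ZB hZB)
    · intro hR
      have hjj' : ((j, j') : D × D) ∈ hChain M {i, i, j} Y' rest' := hR i j i' j' hp' hq' hr'
      exact h4 (hChain_mono M hX'sub hYsub hF hjj')
    · simp [hF.length_eq]
    · intro W hW
      rcases List.mem_cons.mp hW with hW | hW
      · exact hW ▸ triple_ncard_le _ _ _
      rcases List.mem_cons.mp hW with hW | hW
      · exact hW ▸ hYcard
      · exact hcards _ hW
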